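/- Let α = β + γ be a vector of Z^{1,9} with α·ω_0 = 0, α^2 = -2 and m := ω_d·α satisfying 1 ≤ m ≤ d-1, where β ∈ Z^{1,n} = span(h, e_1,...,e_n) and γ ∈ Z^d = span(e_{n+1},...,e_9), n = 9-d. Then γ = -Σ_{i∈I} e_i for some m-element subset I of {n+1,...,9}; in particular γ^2 = -m and β^2 = m - 2. -/

import Mathlib

open Finset

/-- The lattice `Z^{1,9}` as integer vectors indexed by `Fin 10`:
coordinate `0` is `h`, coordinates `1,…,9` are `e_1,…,e_9`. -/
abbrev V : Type := Fin 10 → ℤ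

/-- The Minkowski bilinear form: `h·h = 1`, `e_i·e_i = -1`, distinct basis vectors orthogonal. -/
def form (v w : V) : ℤ := v 0 * w 0 - ∑ i : Fin 9, v i.succ * w i.succ

/-- The basis vector `h`. -/
def hvec : V := Pi.single 0 1

/-- The basis vector `e_{i+1}` (so `evec i` for `i : Fin 9` is `e_1,…,e_9`). -/
def evec (i : Fin 9) : V := Pi.single i.succ 1

/-- `ω_d = 3h - (e_1 + … + e_n)`, recorded as a function of `n`. -/
def omegaV (n : ℕ) : V :=
  (3 : ℤ) • hvec - ∑ i ∈ Finset.univ.filter (fun i : Fin 9 => (i : ℕ) < n), evec i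

/-- `ω_0 = 3h - (e_1 + … + e_9)`. -/
def omega0 : V := omegaV 9

/-- `β` lies in `Z^{1,n}`, the span of `h, e_1, …, e_n`. -/
def inSpan1 (n : ℕ) (v : V) : Prop := ∀ j : Fin 10, n < (j : ℕ) → v j = 0

/-- `γ` lies in `Z^d`, the span of `e_{n+1}, …, e_9`. -/
def inSpan2 (n : ℕ) (v : V) : Prop := ∀ j : Fin 10, (j : ℕ) ≤ n → v j = 0

lemma hvec_zero : hvec 0 = 1 := rfl

lemma hvec_succ (k : Fin 9) : hvec k.succ = 0 := by
  simp [hvec, Pi.single_apply, (Fin.succ_ne_zero k)]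

lemma evec_zero (i : Fin 9) : evec i 0 = 0 := by
  simp [evec, Pi.single_apply, (Fin.succ_ne_zero i).symm]

lemma evec_succ (i k : Fin 9) : evec i k.succ = if k = i then 1 else 0 := by
  simp [evec, Pi.single_apply, Fin.succ_inj]

lemma aux_sq_add_self_nonneg (x : ℤ) : 0 ≤ x ^ 2 + x := by
  have h5 : (2 * x + 1) ^ 2 = 4 * (x ^ 2 + x) + 1 := by ring
  have h6 : (0 : ℤ) ≤ 4 * (x ^ 2 + x) + 1 := h5 ▸ sq_nonneg (2 * x + 1)
  omega

lemma aux_sq_mod_two (x : ℤ) : x ^ 2 % 2 = x % 2 := by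
  obtain ⟨k, hk⟩ := Int.even_mul_succ_self x
  have hx : x ^ 2 = 2 * k - x := by linear_combination hk
  omega

lemma omegaV_zero (n : ℕ) : omegaV n 0 = 3 := by
  simp [omegaV, evec_zero, hvec_zero]

lemma omegaV_succ (n : ℕ) (k : Fin 9) :
    omegaV n k.succ = if (k : ℕ) < n then -1 else 0 := by
  simp only [omegaV, Pi.sub_apply, Pi.smul_apply, hvec_succ, Finset.sum_apply, evec_succ,
    smul_zero, zero_sub]
  rw [Finset.sum_ite_eq]
  by_cases h : (k : ℕ) < n <;> simp [h]

/-- if `α = β + γ` is a real root with `m = ω_d·α` and `1 ≤ m ≤ d-1`,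
then `γ = -Σ_{i ∈ I} e_i` for an `m`-element subset `I` of `{n+1,…,9}`;
in particular `γ² = -m` and `β² = m - 2`. -/
theorem stmt_6 (d : ℕ) (hd2 : 2 ≤ d) (hd8 : d ≤ 8) (n : ℕ) (hn : n = 9 - d)
    (α β γ : V) (hβ : inSpan1 n β) (hγ : inSpan2 n γ) (hαβγ : α = β + γ)
    (h0 : form α omega0 = 0) (h2 : form α α = -2)
    (m : ℤ) (hm : m = form (omegaV n) α) (hm1 : 1 ≤ m) (hm2 : m ≤ (d : ℤ) - 1) :
    (∃ I : Finset (Fin 9), (∀ i ∈ I, n ≤ (i : ℕ)) ∧ (I.card : ℤ) = m ∧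
      γ = -∑ i ∈ I, evec i) ∧
    form γ γ = -m ∧ form β β = m - 2 := by
  have hn1 : 1 ≤ n := by omega
  have hn7 : n ≤ 7 := by omega
  have hcardT : (univ.filter (fun i : Fin 9 => (i : ℕ) < n)).card = n := by
    interval_cases n <;> decide
  set T : Finset (Fin 9) := univ.filter (fun i : Fin 9 => (i : ℕ) < n) with hT
  set U : Finset (Fin 9) := univ.filter (fun i : Fin 9 => ¬ (i : ℕ) < n) with hU
  -- coordinate facts
  have hγ0 : γ 0 = 0 := hγ 0 (by norm_num)
  have hβ0 : β 0 = α 0 := by simp [hαβγ, hγ0]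
  have hγT : ∀ i ∈ T, γ i.succ = 0 := by
    intro i hi
    rw [hT, mem_filter] at hi
    exact hγ i.succ (by simpa [Fin.val_succ] using hi.2)
  have hβU : ∀ i ∈ U, β i.succ = 0 := by
    intro i hi
    rw [hU, mem_filter] at hi
    exact hβ i.succ (by simp [Fin.val_succ]; omega)
  have hαT : ∀ i ∈ T, β i.succ = α i.succ := by
    intro i hi; rw [hαβγ]; simp [hγT i hi]
  have hαU : ∀ i ∈ U, γ i.succ = α i.succ := by
    intro i hi; rw [hαβγ]; simp [hβU i hi]
  set s : ℤ := ∑ i ∈ T, α i.succ with hs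
  set su : ℤ := ∑ i ∈ U, α i.succ with hsu
  set q : ℤ := ∑ i ∈ T, (α i.succ) ^ 2 with hq
  set qu : ℤ := ∑ i ∈ U, (α i.succ) ^ 2 with hqu
  have hsplit : ∑ i : Fin 9, α i.succ = s + su := by
    rw [hs, hsu, hT, hU]; exact (Finset.sum_filter_add_sum_filter_not _ _ _).symm
  have hsplitq : ∑ i : Fin 9, (α i.succ) ^ 2 = q + qu := by
    rw [hq, hqu, hT, hU]; exact (Finset.sum_filter_add_sum_filter_not _ _ _).symm
  -- expand h0
  have h0' : 3 * α 0 + (s + su) = 0 := by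
    have e0 : ∀ i : Fin 9, α i.succ * (if (i : ℕ) < 9 then (-1 : ℤ) else 0) = -α i.succ := by
      intro i; rw [if_pos i.isLt]; ring
    have e : form α omega0 = 3 * α 0 + ∑ i : Fin 9, α i.succ := by
      simp only [form, omega0, omegaV_zero, omegaV_succ]
      rw [Finset.sum_congr rfl fun i _ => e0 i, Finset.sum_neg_distrib]
      ring
    rw [e, hsplit] at h0; exact h0
  -- expand h2
  have h2' : α 0 ^ 2 - (q + qu) = -2 := by
    have e : form α α = α 0 ^ 2 - ∑ i : Fin 9, (α i.succ) ^ 2 := by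
      simp only [form, sq]
    rw [e, hsplitq] at h2; exact h2
  -- expand hm
  have hm' : m = 3 * α 0 + s := by
    rw [hm]
    simp only [form, omegaV_zero, omegaV_succ]
    have e0 : ∀ i : Fin 9, (if (i : ℕ) < n then (-1 : ℤ) else 0) * α i.succ
        = (if (i : ℕ) < n then -α i.succ else 0) := by
      intro i; split <;> ring
    rw [Finset.sum_congr rfl fun i _ => e0 i]
    rw [← Finset.sum_filter, ← hT, Finset.sum_neg_distrib, hs]
    ring
  have hsu' : su = -m := by linarith
  -- Cauchy-Schwarz on T
  have hCS : s ^ 2 ≤ (n : ℤ) * q := by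
    have h := sq_sum_le_card_mul_sum_sq (s := T) (f := fun i => α i.succ)
    rw [hcardT] at h
    rw [hs, hq]
    exact_mod_cast h
  have hββ : form β β = α 0 ^ 2 - q := by
    have hsum : ∑ i : Fin 9, β i.succ * β i.succ = q := by
      rw [← Finset.sum_filter_add_sum_filter_not univ (fun i : Fin 9 => (i : ℕ) < n)
        (fun i => β i.succ * β i.succ), ← hT, ← hU]
      have e1 : ∑ i ∈ T, β i.succ * β i.succ = ∑ i ∈ T, (α i.succ) ^ 2 :=
        Finset.sum_congr rfl fun i hi => by rw [hαT i hi, sq]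
      have e2 : ∑ i ∈ U, β i.succ * β i.succ = 0 :=
        Finset.sum_eq_zero fun i hi => by rw [hβU i hi, mul_zero]
      rw [e1, e2, add_zero, hq]
    simp only [form, hβ0, hsum]; ring
  have hγγ : form γ γ = -qu := by
    have hsum : ∑ i : Fin 9, γ i.succ * γ i.succ = qu := by
      rw [← Finset.sum_filter_add_sum_filter_not univ (fun i : Fin 9 => (i : ℕ) < n)
        (fun i => γ i.succ * γ i.succ), ← hT, ← hU]
      have e1 : ∑ i ∈ T, γ i.succ * γ i.succ = 0 :=
        Finset.sum_eq_zero fun i hi => by rw [hγT i hi, mul_zero]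
      have e2 : ∑ i ∈ U, γ i.succ * γ i.succ = ∑ i ∈ U, (α i.succ) ^ 2 :=
        Finset.sum_congr rfl fun i hi => by rw [hαU i hi, sq]
      rw [e1, e2, zero_add, hqu]
    simp only [form, hγ0, hsum]; ring
  have hNn : (n : ℤ) ≤ 7 := by exact_mod_cast hn7
  have hNn1 : (1 : ℤ) ≤ (n : ℤ) := by exact_mod_cast hn1
  have hD : (d : ℤ) = 9 - (n : ℤ) := by omega
  -- Lorentzian bound
  have hlor : (d : ℤ) * (α 0 ^ 2 - q) ≤ m ^ 2 := by
    have key : 0 ≤ (n : ℤ) * ((3 * α 0 + s) ^ 2 - (9 - (n : ℤ)) * (α 0 ^ 2 - q)) := by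
      have hid : (n : ℤ) * ((3 * α 0 + s) ^ 2 - (9 - (n : ℤ)) * (α 0 ^ 2 - q))
          = ((n : ℤ) * α 0 + 3 * s) ^ 2 + (9 - (n : ℤ)) * ((n : ℤ) * q - s ^ 2) := by ring
      rw [hid]
      have h1 : 0 ≤ ((n : ℤ) * α 0 + 3 * s) ^ 2 := sq_nonneg _
      have h2 : 0 ≤ (9 - (n : ℤ)) * ((n : ℤ) * q - s ^ 2) :=
        mul_nonneg (by linarith) (by linarith)
      linarith
    have hNpos : (0 : ℤ) < (n : ℤ) := by linarith
    have h3 : 0 ≤ (3 * α 0 + s) ^ 2 - (9 - (n : ℤ)) * (α 0 ^ 2 - q) :=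
      nonneg_of_mul_nonneg_right key hNpos
    rw [hD, hm']
    linarith
  have hd2' : (2 : ℤ) ≤ (d : ℤ) := by exact_mod_cast hd2
  have hββ1 : α 0 ^ 2 - q ≤ m - 1 := by
    by_contra hcon
    push_neg at hcon
    have hX : m ≤ α 0 ^ 2 - q := by omega
    have h1 := mul_le_mul_of_nonneg_left hX (by linarith : (0 : ℤ) ≤ (d : ℤ))
    have h2 := mul_le_mul_of_nonneg_left hm2 (by linarith : (0 : ℤ) ≤ m)
    nlinarith [hlor, h1, h2]
  -- parity
  have hx2 : ∀ x : ℤ, x ^ 2 % 2 = x % 2 := aux_sq_mod_two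
  have hpar : (m - (α 0 ^ 2 - q)) % 2 = 0 := by
    have hqpar : q % 2 = s % 2 := by
      rw [hq, hs, Finset.sum_int_mod, Finset.sum_congr rfl (fun i _ => hx2 (α i.succ)),
        ← Finset.sum_int_mod]
    have haa : α 0 ^ 2 % 2 = α 0 % 2 := hx2 (α 0)
    omega
  have hββ2 : α 0 ^ 2 - q ≤ m - 2 := by omega
  have hqum : qu ≤ m := by linarith
  have hterm : ∀ x : ℤ, 0 ≤ x ^ 2 + x := aux_sq_add_self_nonneg
  have hsum0 : ∑ i ∈ U, ((α i.succ) ^ 2 + α i.succ) = 0 := by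
    have hle : ∑ i ∈ U, ((α i.succ) ^ 2 + α i.succ) ≤ 0 := by
      rw [Finset.sum_add_distrib, ← hqu, ← hsu]; omega
    have hge : 0 ≤ ∑ i ∈ U, ((α i.succ) ^ 2 + α i.succ) :=
      Finset.sum_nonneg (fun i _ => hterm _)
    omega
  have hzero : ∀ i ∈ U, (α i.succ) ^ 2 + α i.succ = 0 :=
    fun i hi => (Finset.sum_eq_zero_iff_of_nonneg (fun i _ => hterm (α i.succ))).1 hsum0 i hi
  have hdich : ∀ i ∈ U, α i.succ = 0 ∨ α i.succ = -1 := by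
    intro i hi
    have h5 : α i.succ * (α i.succ + 1) = 0 := by linear_combination hzero i hi
    rcases mul_eq_zero.1 h5 with h | h
    · exact Or.inl h
    · exact Or.inr (by omega)
  have hquval : qu = m := by
    have h6 : qu + su = 0 := by
      rw [hqu, hsu, ← Finset.sum_add_distrib]; exact hsum0
    omega
  set I : Finset (Fin 9) := U.filter (fun i => α i.succ = -1) with hI
  have hIcard : (I.card : ℤ) = m := by
    have hsuI : su = -(I.card : ℤ) := by
      rw [hsu, ← Finset.sum_filter_add_sum_filter_not U (fun i => α i.succ = -1), ← hI]
      have e1 : ∑ i ∈ I, α i.succ = -(I.card : ℤ) := by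
        rw [Finset.sum_congr rfl (fun i hi => (Finset.mem_filter.1 hi).2)]
        simp [hI]
      have e2 : ∑ i ∈ U.filter (fun i => ¬ α i.succ = -1), α i.succ = 0 := by
        apply Finset.sum_eq_zero
        intro i hi
        rw [Finset.mem_filter] at hi
        rcases hdich i hi.1 with h | h
        · exact h
        · exact absurd h hi.2
      rw [e1, e2, add_zero]
    omega
  refine ⟨⟨I, ?_, hIcard, ?_⟩, by omega, by omega⟩
  · intro i hi
    rw [hI, Finset.mem_filter, hU, Finset.mem_filter] at hi
    omega
  · funext j
    induction j using Fin.cases with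
    | zero =>
      simp only [Pi.neg_apply, Finset.sum_apply, evec_zero, Finset.sum_const_zero, neg_zero]
      exact hγ0
    | succ k =>
      simp only [Pi.neg_apply, Finset.sum_apply, evec_succ]
      rw [Finset.sum_ite_eq]
      by_cases hk : k ∈ I
      · rw [if_pos hk]
        rw [hI, Finset.mem_filter] at hk
        rw [hαU k hk.1, hk.2]
      · rw [if_neg hk]
        by_cases hkU : k ∈ U
        · have h7 : α k.succ = 0 := by
            rcases hdich k hkU with h | h
            · exact h
            · exact absurd (by rw [hI, Finset.mem_filter]; exact ⟨hkU, h⟩) hk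
          rw [hαU k hkU, h7, neg_zero]
        · have hkT : k ∈ T := by
            rw [hT, Finset.mem_filter]; rw [hU, Finset.mem_filter] at hkU
            simp at hkU ⊢; omega
          rw [hγT k hkT, neg_zero]
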